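/- Let A be an abelian C*-algebra and T : A_sa → X a linear map into a Banach space. Suppose J_T := { a ∈ A_sa : the map x ↦ T(axa) is continuous } is norm-closed and satisfies a·A_sa·a ⊆ J_T for every a ∈ J_T. Then J_T is a linear subspace of A_sa (and hence a closed triple ideal of A_sa for the product {a,b,c} = abc). -/

import Mathlib

open Filter Topology

/-- Key approximation lemma: if `a ∈ JT`, `JT` is closed and stable under
`a * b * a`, then `cfc f a ∈ JT` for any continuous `f` with `f 0 = 0`. -/
private lemma key_cfc {A : Type*} [CommCStarAlgebra A]
    (JT : Set A) (hclosed : IsClosed JT)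
    (hinner : ∀ a ∈ JT, ∀ b : A, IsSelfAdjoint b → a * b * a ∈ JT)
    {a : A} (ha : a ∈ JT) (hsa : IsSelfAdjoint a)
    (f : ℝ → ℝ) (hf : Continuous f) (hf0 : f 0 = 0) :
    cfc f a ∈ JT := by
  rw [← hclosed.closure_eq]
  rw [Metric.mem_closure_iff]
  intro ε hε
  obtain ⟨M, hM⟩ := (spectrum.isCompact (𝕜 := ℝ) a).exists_bound_of_continuousOn hf.continuousOn
  have hMb : ∀ t ∈ spectrum ℝ a, |f t| ≤ max M 1 := fun t ht =>
    le_trans (by simpa [Real.norm_eq_abs] using hM t ht) (le_max_left _ _)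
  set M' : ℝ := max M 1 with hM'def
  have hM'pos : (0:ℝ) < M' := lt_max_of_lt_right one_pos
  obtain ⟨η, hηpos, hη⟩ := Metric.continuous_iff.mp hf 0 (ε/2) (by positivity)
  have hη' : ∀ t : ℝ, |t| < η → |f t| < ε/2 := by
    intro t ht
    have := hη t (by simpa [Real.dist_eq] using ht)
    simpa [Real.dist_eq, hf0] using this
  set δ : ℝ := ε/2 * η^2 / M' with hδdef
  have hδpos : 0 < δ := by positivity
  set g : ℝ → ℝ := fun t => f t / (t^2 + δ) with hgdef
  have hgc : Continuous g := by
    apply hf.div (by fun_prop)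
    intro t; positivity
  refine ⟨a * cfc g a * a, hinner a ha _ (cfc_predicate g a), ?_⟩
  have hkey : cfc (fun t : ℝ => t * g t * t) a = a * cfc g a * a := by
    have h1 : cfc (fun t : ℝ => (t * g t) * t) a
        = cfc (fun t : ℝ => t * g t) a * cfc (fun t : ℝ => t) a :=
      cfc_mul _ _ a ((continuous_id.mul hgc).continuousOn) continuous_id.continuousOn
    have h2 : cfc (fun t : ℝ => t * g t) a = cfc (fun t : ℝ => t) a * cfc g a :=
      cfc_mul _ _ a continuous_id.continuousOn hgc.continuousOn
    rw [h1, h2, cfc_id' ℝ a hsa]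
  have hsub : cfc f a - cfc (fun t : ℝ => t * g t * t) a
      = cfc (fun t : ℝ => f t - t * g t * t) a := by
    refine (cfc_sub _ _ a hf.continuousOn ?_).symm
    exact ((continuous_id.mul hgc).mul continuous_id).continuousOn
  have hbound : ‖cfc (fun t : ℝ => f t - t * g t * t) a‖ ≤ ε/2 := by
    apply norm_cfc_le (by positivity)
    intro t ht
    have htpos : (0:ℝ) < t^2 + δ := by positivity
    have hrw : f t - t * g t * t = f t * δ / (t^2 + δ) := by
      rw [hgdef]
      field_simp
      ring
    rw [hrw, Real.norm_eq_abs, abs_div, abs_of_pos htpos, abs_mul, abs_of_pos hδpos,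
      div_le_iff₀ htpos]
    rcases lt_or_ge |t| η with h | h
    · have h1 : |f t| ≤ ε/2 := (hη' t h).le
      nlinarith [abs_nonneg (f t), sq_nonneg t]
    · have h1 : η^2 ≤ t^2 := by nlinarith [sq_abs t, abs_nonneg t]
      have h2 : |f t| ≤ M' := hMb t ht
      have h3 : M' * δ = ε/2 * η^2 := by
        rw [hδdef]; field_simp
      nlinarith [abs_nonneg (f t), mul_le_mul_of_nonneg_right h2 hδpos.le,
        mul_le_mul_of_nonneg_left h1 (le_of_lt (half_pos hε))]
  calc dist (cfc f a) (a * cfc g a * a)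
      = ‖cfc (fun t : ℝ => f t - t * g t * t) a‖ := by rw [dist_eq_norm, ← hkey, hsub]
    _ ≤ ε/2 := hbound
    _ < ε := by linarith

/-- Let `A` be an abelian C*-algebra and `T` a real-linear map on `A_sa` into a
Banach space. If `J_T = {a ∈ A_sa : x ↦ T (a x a) is continuous}` is norm-closed
and satisfies `a ⬝ A_sa ⬝ a ⊆ J_T` for every `a ∈ J_T`, then `J_T` is a linear
subspace of `A_sa`, and a (closed) triple ideal of `A_sa` for `{a,b,c} = abc`. -/
theorem stmt19 {A X : Type*}
    [NormedCommRing A] [StarRing A] [CStarRing A] [CompleteSpace A]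
    [NormedAlgebra ℂ A] [StarModule ℂ A]
    [NormedAddCommGroup X] [NormedSpace ℝ X] [CompleteSpace X]
    (T : A → X)
    (hadd : ∀ a b : A, IsSelfAdjoint a → IsSelfAdjoint b → T (a + b) = T a + T b)
    (hsmul : ∀ (r : ℝ) (a : A), IsSelfAdjoint a → T (r • a) = r • T a)
    (JT : Set A)
    (hJT : JT = {a : A | IsSelfAdjoint a ∧
      Continuous fun x : selfAdjoint A => T (a * (x : A) * a)})
    (hclosed : IsClosed JT)
    (hinner : ∀ a ∈ JT, ∀ b : A, IsSelfAdjoint b → a * b * a ∈ JT) :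
    (0 : A) ∈ JT ∧
      (∀ a b, a ∈ JT → b ∈ JT → a + b ∈ JT) ∧
      (∀ (r : ℝ) (a), a ∈ JT → r • a ∈ JT) ∧
      (∀ x y : A, IsSelfAdjoint x → IsSelfAdjoint y → ∀ a ∈ JT, x * y * a ∈ JT) := by
  letI : CommCStarAlgebra A := { }
  have hmem : ∀ c : A, c ∈ JT ↔ (IsSelfAdjoint c ∧
      Continuous fun x : selfAdjoint A => T (c * (x : A) * c)) := fun c => by
    rw [hJT]; exact Iff.rfl
  have hsa : ∀ c ∈ JT, IsSelfAdjoint c := fun c hc => ((hmem c).mp hc).1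
  have hxsa : ∀ x : selfAdjoint A, IsSelfAdjoint (x : A) := fun x => x.prop
  have hmulsa : ∀ {c d : A}, IsSelfAdjoint c → IsSelfAdjoint d → IsSelfAdjoint (c * d) := by
    intro c d hc hd
    rw [IsSelfAdjoint, star_mul, hc.star_eq, hd.star_eq, mul_comm]
  -- T 0 = 0
  have T0 : T 0 = 0 := by
    have h := hadd 0 0 (IsSelfAdjoint.zero A) (IsSelfAdjoint.zero A)
    rw [add_zero] at h
    exact left_eq_add.mp h
  -- 0 ∈ JT
  have hzero : (0 : A) ∈ JT := (hmem 0).mpr ⟨IsSelfAdjoint.zero A, by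
    simpa [T0] using (continuous_const : Continuous fun _ : selfAdjoint A => (0 : X))⟩
  -- closed under scalar multiplication
  have hsmulmem : ∀ (r : ℝ) (c : A), c ∈ JT → r • c ∈ JT := by
    intro r c hc
    obtain ⟨hcsa, hccont⟩ := (hmem c).mp hc
    refine (hmem _).mpr ⟨IsSelfAdjoint.smul (star_trivial r) hcsa, ?_⟩
    have heq : (fun x : selfAdjoint A => T ((r • c) * (x : A) * (r • c)))
        = fun x : selfAdjoint A => (r * r) • T (c * (x : A) * c) := by
      funext x
      have h1 : (r • c) * (x : A) * (r • c) = (r * r) • (c * (x : A) * c) := by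
        rw [smul_mul_assoc, smul_mul_assoc, mul_smul_comm, smul_smul]
      rw [h1, hsmul (r * r) _ (hmulsa (hmulsa hcsa (hxsa x)) hcsa)]
    rw [heq]
    exact hccont.const_smul (r * r)
  -- T respects negation and subtraction on selfadjoint elements
  have Tneg : ∀ u : A, IsSelfAdjoint u → T (-u) = -T u := by
    intro u hu
    have := hsmul (-1) u hu
    simpa using this
  have Tsub : ∀ u v : A, IsSelfAdjoint u → IsSelfAdjoint v → T (u - v) = T u - T v := by
    intro u v hu hv
    rw [sub_eq_add_neg, hadd u (-v) hu hv.neg, Tneg v hv, sub_eq_add_neg]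
  -- cfc stability
  have hcfc : ∀ c ∈ JT, ∀ f : ℝ → ℝ, Continuous f → f 0 = 0 → cfc f c ∈ JT :=
    fun c hc f hf hf0 => key_cfc JT hclosed hinner hc (hsa c hc) f hf hf0
  -- K3 : for nonneg f vanishing at 0, cfc f c * b ∈ JT for all selfadjoint b
  have hK3 : ∀ c ∈ JT, ∀ f : ℝ → ℝ, Continuous f → f 0 = 0 → (∀ t, 0 ≤ f t) →
      ∀ b : A, IsSelfAdjoint b → cfc f c * b ∈ JT := by
    intro c hc f hf hf0 hfpos b hb
    have hsq : Continuous fun t => Real.sqrt (f t) := Real.continuous_sqrt.comp hf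
    have hr : cfc (fun t => Real.sqrt (f t)) c ∈ JT :=
      hcfc c hc _ hsq (by simp [hf0])
    have hmem' := hinner _ hr b hb
    have heq : cfc (fun t => Real.sqrt (f t)) c * b * cfc (fun t => Real.sqrt (f t)) c
        = cfc f c * b := by
      rw [mul_right_comm]
      congr 1
      rw [← cfc_mul _ _ c hsq.continuousOn hsq.continuousOn]
      exact cfc_congr fun t _ => Real.mul_self_sqrt (hfpos t)
    rwa [heq] at hmem'
  -- continuity of x ↦ T (d * d * x) for d ∈ JT
  have hsqcont : ∀ d ∈ JT, Continuous fun x : selfAdjoint A => T (d * d * (x : A)) := by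
    intro d hd
    have h := ((hmem d).mp hd).2
    have heq : (fun x : selfAdjoint A => T (d * (x : A) * d))
        = fun x : selfAdjoint A => T (d * d * (x : A)) := by
      funext x; rw [mul_right_comm]
    rwa [heq] at h
  -- the basic functions
  set sp : ℝ → ℝ := fun t => Real.sqrt (max t 0) with hspdef
  set sn : ℝ → ℝ := fun t => Real.sqrt (max (-t) 0) with hsndef
  have hspc : Continuous sp := Real.continuous_sqrt.comp (continuous_id.max continuous_const)
  have hsnc : Continuous sn := Real.continuous_sqrt.comp (continuous_neg.max continuous_const)
  have hsp0 : sp 0 = 0 := by simp [hspdef]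
  have hsn0 : sn 0 = 0 := by simp [hsndef]
  have hsppos : ∀ t, 0 ≤ sp t := fun t => Real.sqrt_nonneg _
  have hsnpos : ∀ t, 0 ≤ sn t := fun t => Real.sqrt_nonneg _
  -- decomposition : cfc sp c * cfc sp c - cfc sn c * cfc sn c = c
  have hdecomp : ∀ c ∈ JT, cfc sp c * cfc sp c - cfc sn c * cfc sn c = c := by
    intro c hc
    rw [← cfc_mul sp sp c hspc.continuousOn hspc.continuousOn,
      ← cfc_mul sn sn c hsnc.continuousOn hsnc.continuousOn,
      ← cfc_sub (fun t => sp t * sp t) (fun t => sn t * sn t) c (hspc.mul hspc).continuousOn (hsnc.mul hsnc).continuousOn]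
    calc cfc (fun t => sp t * sp t - sn t * sn t) c
        = cfc (fun t : ℝ => t) c := by
          refine cfc_congr fun t _ => ?_
          rw [hspdef, hsndef]
          simp only []
          rw [Real.mul_self_sqrt (le_max_right _ _), Real.mul_self_sqrt (le_max_right _ _)]
          exact max_zero_sub_max_neg_zero_eq_self t
      _ = c := cfc_id' ℝ c (hsa c hc)
  -- continuity of x ↦ T (c * d * x) for c, d ∈ JT
  have hScont : ∀ c d : A, c ∈ JT → d ∈ JT →
      Continuous fun x : selfAdjoint A => T (c * d * (x : A)) := by
    intro c d hc hd
    have hP1 : cfc sp c * cfc sp d ∈ JT :=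
      hK3 c hc sp hspc hsp0 hsppos _ (cfc_predicate sp d)
    have hP2 : cfc sp c * cfc sn d ∈ JT :=
      hK3 c hc sp hspc hsp0 hsppos _ (cfc_predicate sn d)
    have hP3 : cfc sn c * cfc sp d ∈ JT :=
      hK3 c hc sn hsnc hsn0 hsnpos _ (cfc_predicate sp d)
    have hP4 : cfc sn c * cfc sn d ∈ JT :=
      hK3 c hc sn hsnc hsn0 hsnpos _ (cfc_predicate sn d)
    set P1 := cfc sp c; set P2 := cfc sn c; set Q1 := cfc sp d; set Q2 := cfc sn d
    have hP1sa : IsSelfAdjoint (P1 * Q1) := hsa _ hP1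
    have hP2sa : IsSelfAdjoint (P1 * Q2) := hsa _ hP2
    have hP3sa : IsSelfAdjoint (P2 * Q1) := hsa _ hP3
    have hP4sa : IsSelfAdjoint (P2 * Q2) := hsa _ hP4
    have heq : (fun x : selfAdjoint A => T (c * d * (x : A)))
        = fun x : selfAdjoint A =>
          (T ((P1 * Q1) * (P1 * Q1) * (x : A)) - T ((P1 * Q2) * (P1 * Q2) * (x : A)))
          - (T ((P2 * Q1) * (P2 * Q1) * (x : A)) - T ((P2 * Q2) * (P2 * Q2) * (x : A))) := by
      funext x
      have hx : IsSelfAdjoint (x : A) := hxsa x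
      have e : c * d * (x : A) =
          (((P1 * Q1) * (P1 * Q1) * (x : A) - (P1 * Q2) * (P1 * Q2) * (x : A))
          - ((P2 * Q1) * (P2 * Q1) * (x : A) - (P2 * Q2) * (P2 * Q2) * (x : A))) := by
        rw [← hdecomp c hc, ← hdecomp d hd]; ring
      rw [e, Tsub _ _ ((hmulsa (hmulsa hP1sa hP1sa) hx).sub (hmulsa (hmulsa hP2sa hP2sa) hx))
          ((hmulsa (hmulsa hP3sa hP3sa) hx).sub (hmulsa (hmulsa hP4sa hP4sa) hx)),
        Tsub _ _ (hmulsa (hmulsa hP1sa hP1sa) hx) (hmulsa (hmulsa hP2sa hP2sa) hx),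
        Tsub _ _ (hmulsa (hmulsa hP3sa hP3sa) hx) (hmulsa (hmulsa hP4sa hP4sa) hx)]
    rw [heq]
    exact ((hsqcont _ hP1).sub (hsqcont _ hP2)).sub ((hsqcont _ hP3).sub (hsqcont _ hP4))
  -- closed under addition
  have haddmem : ∀ a b : A, a ∈ JT → b ∈ JT → a + b ∈ JT := by
    intro a b ha hb
    have hasa := hsa a ha
    have hbsa := hsa b hb
    refine (hmem _).mpr ⟨hasa.add hbsa, ?_⟩
    have heq : (fun x : selfAdjoint A => T ((a + b) * (x : A) * (a + b)))
        = fun x : selfAdjoint A =>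
          (T (a * a * (x : A)) + T (b * b * (x : A)))
          + (T (a * b * (x : A)) + T (a * b * (x : A))) := by
      funext x
      have hx : IsSelfAdjoint (x : A) := hxsa x
      have e : (a + b) * (x : A) * (a + b)
          = (a * a * (x : A) + b * b * (x : A)) + (a * b * (x : A) + a * b * (x : A)) := by
        ring
      rw [e, hadd _ _ ((hmulsa (hmulsa hasa hasa) hx).add (hmulsa (hmulsa hbsa hbsa) hx))
          ((hmulsa (hmulsa hasa hbsa) hx).add (hmulsa (hmulsa hasa hbsa) hx)),
        hadd _ _ (hmulsa (hmulsa hasa hasa) hx) (hmulsa (hmulsa hbsa hbsa) hx),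
        hadd _ _ (hmulsa (hmulsa hasa hbsa) hx) (hmulsa (hmulsa hasa hbsa) hx)]
    rw [heq]
    exact ((hsqcont a ha).add (hsqcont b hb)).add ((hScont a b ha hb).add (hScont a b ha hb))
  -- closed under subtraction
  have hsubmem : ∀ u v : A, u ∈ JT → v ∈ JT → u - v ∈ JT := by
    intro u v hu hv
    have := haddmem u ((-1 : ℝ) • v) hu (hsmulmem (-1) v hv)
    rwa [neg_one_smul, ← sub_eq_add_neg] at this
  refine ⟨hzero, haddmem, hsmulmem, ?_⟩
  -- triple ideal property
  intro x y hx hy a ha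
  have hxy : IsSelfAdjoint (x * y) := hmulsa hx hy
  have h1 : cfc (fun t : ℝ => max t 0) a * (x * y) ∈ JT :=
    hK3 a ha _ (continuous_id.max continuous_const) (by simp) (fun t => le_max_right _ _)
      _ hxy
  have h2 : cfc (fun t : ℝ => max (-t) 0) a * (x * y) ∈ JT :=
    hK3 a ha _ (continuous_neg.max continuous_const) (by simp) (fun t => le_max_right _ _)
      _ hxy
  have hdec : cfc (fun t : ℝ => max t 0) a - cfc (fun t : ℝ => max (-t) 0) a = a := by
    rw [← cfc_sub (fun t : ℝ => max t 0) (fun t : ℝ => max (-t) 0) a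
      (continuous_id.max continuous_const).continuousOn
      (continuous_neg.max continuous_const).continuousOn]
    calc cfc (fun t : ℝ => max t 0 - max (-t) 0) a
        = cfc (fun t : ℝ => t) a := cfc_congr fun t _ => max_zero_sub_max_neg_zero_eq_self t
      _ = a := cfc_id' ℝ a (hsa a ha)
  have e : x * y * a = cfc (fun t : ℝ => max t 0) a * (x * y)
      - cfc (fun t : ℝ => max (-t) 0) a * (x * y) := by
    rw [← sub_mul, hdec]; ring
  rw [e]
  exact hsubmem _ _ h1 h2
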